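/- Let (ρ, J) be a finite energy weak solution of the QHD system with ∫|x|²ρ₀ dx < ∞ and p(ρ) = ((γ−1)/γ)ρ^γ, 1 < γ ≤ 1 + 2/d. Then ∫ ρ^γ(t,x) dx ≲ t^{d(1−γ)} and V(t) ≲ t^{2(1−σ)} + ∫(|x|²/2)ρ₀ dx with σ = d(γ−1)/2; consequently ‖∇√ρ(t)‖_{L²} ≲ t^{−σ}, ‖Λ(t) − (x/t)√ρ(t)‖_{L²} ≲ t^{−σ}, and ‖ρ^{γ/2}(t)‖_{L²} ≲ t^{−σ}. -/

import Mathlib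

open MeasureTheory intervalIntegral
open scoped RealInnerProductSpace

noncomputable section

theorem gronwall_log {c T : ℝ} (hc : 0 < c) (hT : 1 ≤ T) (M : ℝ → ℝ)
    (hmono : MonotoneOn M (Set.Icc 1 T))
    (hineq : ∀ u ∈ Set.Icc (1:ℝ) T, M u ≤ M 1 + ∫ s in (1:ℝ)..u, c * M s / s) :
    M T ≤ M 1 * Real.exp (c * Real.log T) := by
  set w : ℕ → ℝ → ℝ := fun k s => (c * Real.log s) ^ k / (Nat.factorial k) with hw
  have key : ∀ n : ℕ, ∀ u ∈ Set.Icc (1:ℝ) T,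
      M u ≤ M 1 * (∑ k ∈ Finset.range n, w k u) + w n u * M T := by
    intro n
    induction n with
    | zero =>
      intro u hu
      simp only [Finset.range_zero, Finset.sum_empty, hw, pow_zero, Nat.factorial_zero]
      have := hmono hu (Set.right_mem_Icc.2 (le_trans hu.1 hu.2)) hu.2
      simpa using this
    | succ n ih =>
      intro u hu
      have hu1 : (1:ℝ) ≤ u := hu.1
      have hsub : Set.Icc (1:ℝ) u ⊆ Set.Icc 1 T := Set.Icc_subset_Icc le_rfl hu.2
      have huIcc : Set.uIcc (1:ℝ) u = Set.Icc 1 u := Set.uIcc_of_le hu1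
      have hpos : ∀ s ∈ Set.uIcc (1:ℝ) u, (0:ℝ) < s := by
        intro s hs; rw [huIcc] at hs; linarith [hs.1]
      -- integrability of M on [1,u]
      have hMint : IntervalIntegrable M volume 1 u := by
        apply MonotoneOn.intervalIntegrable
        rw [huIcc]; exact hmono.mono hsub
      have hcont : ContinuousOn (fun s : ℝ => c / s) (Set.uIcc (1:ℝ) u) :=
        ContinuousOn.div continuousOn_const continuousOn_id
          (fun s hs => ne_of_gt (hpos s hs))
      have hLHSeq : (fun s => c * M s / s) = fun s => (c / s) * M s := by
        funext s; ring
      have hLHSint : IntervalIntegrable (fun s => c * M s / s) volume 1 u := by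
        rw [hLHSeq]; exact hMint.continuousOn_mul hcont
      -- continuity of the w's
      have hlog : ContinuousOn (fun s : ℝ => c * Real.log s) (Set.uIcc (1:ℝ) u) :=
        continuousOn_const.mul (Real.continuousOn_log.mono
          (fun s hs => ne_of_gt (hpos s hs)))
      have hwcont : ∀ k, ContinuousOn (w k) (Set.uIcc (1:ℝ) u) := fun k =>
        (hlog.pow k).div_const _
      set Bn : ℝ → ℝ := fun s =>
        M 1 * (∑ k ∈ Finset.range n, w k s) + w n s * M T with hBn
      have hBncont : ContinuousOn Bn (Set.uIcc (1:ℝ) u) :=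
        (continuousOn_const.mul
          (continuousOn_finset_sum _ (fun k _ => hwcont k))).add
          ((hwcont n).mul continuousOn_const)
      have hRHSint : IntervalIntegrable (fun s => (c / s) * Bn s) volume 1 u :=
        (hcont.mul hBncont).intervalIntegrable
      -- comparison
      have hstep : (∫ s in (1:ℝ)..u, c * M s / s) ≤ ∫ s in (1:ℝ)..u, (c / s) * Bn s := by
        apply integral_mono_on hu1 hLHSint hRHSint
        intro s hs
        have hs1 : (1:ℝ) ≤ s := hs.1
        have hcs : 0 ≤ c / s := div_nonneg hc.le (by linarith)
        have := ih s (hsub hs)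
        calc c * M s / s = (c / s) * M s := by ring
          _ ≤ (c / s) * Bn s := mul_le_mul_of_nonneg_left this hcs
      -- key antiderivative computation
      have hkey : ∀ k : ℕ, (∫ s in (1:ℝ)..u, (c / s) * w k s) = w (k+1) u := by
        intro k
        have hderiv : ∀ s ∈ Set.uIcc (1:ℝ) u, HasDerivAt (w (k+1)) ((c / s) * w k s) s := by
          intro s hs
          have hs0 : s ≠ 0 := ne_of_gt (hpos s hs)
          have h2 : HasDerivAt (fun s : ℝ => c * Real.log s) (c * s⁻¹) s :=
            (Real.hasDerivAt_log hs0).const_mul c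
          have h3 : HasDerivAt (w (k+1)) _ s := (h2.pow (k+1)).div_const ((Nat.factorial (k+1) : ℝ))
          convert h3 using 1
          have : ((Nat.factorial (k+1) : ℝ)) = (k+1) * (Nat.factorial k) := by
            rw [Nat.factorial_succ]; push_cast; ring
          simp only [hw, this, Nat.add_sub_cancel]
          have hk0 : (Nat.factorial k : ℝ) ≠ 0 := by positivity
          field_simp
          push_cast
          ring
        rw [intervalIntegral.integral_eq_sub_of_hasDerivAt hderiv
          ((hcont.mul (hwcont k)).intervalIntegrable)]
        have : w (k+1) 1 = 0 := by
          simp [hw, Real.log_one]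
        rw [this, sub_zero]
      -- computing the integral of the bound
      have hcompute : (∫ s in (1:ℝ)..u, (c / s) * Bn s)
          = M 1 * (∑ k ∈ Finset.range n, w (k+1) u) + w (n+1) u * M T := by
        have hsplit : (fun s => (c / s) * Bn s)
            = fun s => (∑ k ∈ Finset.range n, M 1 * ((c / s) * w k s))
              + ((c / s) * w n s) * M T := by
          funext s
          simp only [hBn, mul_add, Finset.mul_sum]
          congr 1
          · exact Finset.sum_congr rfl fun k _ => by ring
          · ring
        have hterm : ∀ k : ℕ, IntervalIntegrable
            (fun s => M 1 * (c / s * w k s)) volume 1 u := fun k =>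
          ((hcont.mul (hwcont k)).intervalIntegrable).const_mul _
        have hlast : IntervalIntegrable (fun s => (c / s * w n s) * M T) volume 1 u :=
          ((hcont.mul (hwcont n)).intervalIntegrable).mul_const _
        have hsumint : IntervalIntegrable
            (fun s => ∑ k ∈ Finset.range n, M 1 * (c / s * w k s)) volume 1 u := by
          have := IntervalIntegrable.sum (μ := volume) (Finset.range n)
            (f := fun k s => M 1 * (c / s * w k s)) (fun k _ => hterm k)
          convert this using 1
          rfl
          funext s
          simp
        rw [hsplit, intervalIntegral.integral_add hsumint hlast,
          intervalIntegral.integral_finset_sum (fun k _ => hterm k),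
          intervalIntegral.integral_mul_const, hkey n]
        congr 1
        have hc1 : ∀ k ∈ Finset.range n,
            (∫ s in (1:ℝ)..u, M 1 * (c / s * w k s)) = M 1 * w (k+1) u := by
          intro k _
          rw [intervalIntegral.integral_const_mul, hkey k]
        rw [Finset.sum_congr rfl hc1, ← Finset.mul_sum]
      -- assemble
      have hsum : M 1 * (∑ k ∈ Finset.range (n+1), w k u)
          = M 1 + M 1 * (∑ k ∈ Finset.range n, w (k+1) u) := by
        rw [Finset.sum_range_succ']
        have : w 0 u = 1 := by simp [hw]
        rw [this, mul_add, mul_one]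
        ring
      have := hineq u hu
      rw [hsum]
      calc M u ≤ M 1 + ∫ s in (1:ℝ)..u, c * M s / s := hineq u hu
        _ ≤ M 1 + ∫ s in (1:ℝ)..u, (c / s) * Bn s := by linarith
        _ = M 1 + (M 1 * (∑ k ∈ Finset.range n, w (k+1) u) + w (n+1) u * M T) := by
            rw [hcompute]
        _ = M 1 + M 1 * (∑ k ∈ Finset.range n, w (k+1) u) + w (n+1) u * M T := by ring
  -- take the limit
  have hTmem : T ∈ Set.Icc (1:ℝ) T := Set.right_mem_Icc.2 hT
  have hx : HasSum (fun k : ℕ => (c * Real.log T) ^ k / (Nat.factorial k))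
      (Real.exp (c * Real.log T)) := by
    rw [Real.exp_eq_exp_ℝ]
    exact NormedSpace.expSeries_div_hasSum_exp (c * Real.log T)
  have hlim : Filter.Tendsto (fun n => M 1 * (∑ k ∈ Finset.range n, w k T) + w n T * M T)
      Filter.atTop (nhds (M 1 * Real.exp (c * Real.log T) + 0 * M T)) := by
    apply Filter.Tendsto.add
    · exact hx.tendsto_sum_nat.const_mul _
    · exact (FloorSemiring.tendsto_pow_div_factorial_atTop (c * Real.log T)).mul_const _
  have := ge_of_tendsto' hlim (fun n => key n T hTmem)
  simpa using this




set_option maxHeartbeats 2000000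

/-- Dispersive estimates for finite energy weak solutions of the QHD system
with `p(ρ) = ((γ−1)/γ)ρ^γ`, `1 < γ ≤ 1 + 2/d` and finite initial variance.
The pseudo-conformal energy `V(t)` (given by its representation) satisfies the
pseudo-conformal identity; then, with `σ = d(γ−1)/2`,
`∫ρ^γ(t) ≲ t^{d(1−γ)}`, `V(t) ≲ t^{2(1−σ)} + ∫(|x|²/2)ρ₀`, and
`‖∇√ρ(t)‖_{L²} ≲ t^{−σ}`, `‖Λ(t) − (x/t)√ρ(t)‖_{L²} ≲ t^{−σ}`,
`‖ρ^{γ/2}(t)‖_{L²} ≲ t^{−σ}`. -/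
theorem dispersive_estimates_QHD {d : ℕ} (hd : 0 < d)
    (γ : ℝ) (hγ : 1 < γ) (hγ' : γ ≤ 1 + 2 / (d : ℝ))
    (σ : ℝ) (hσ : σ = (d : ℝ) * (γ - 1) / 2)
    (sr : ℝ → EuclideanSpace ℝ (Fin d) → ℝ)
    (Λ : ℝ → EuclideanSpace ℝ (Fin d) → EuclideanSpace ℝ (Fin d))
    (hsr : ∀ t x, 0 ≤ sr t x)
    (hsrdiff : ∀ t, Differentiable ℝ (sr t))
    (hvar0 : Integrable (fun x => ‖x‖ ^ 2 * (sr 0 x) ^ 2))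
    (hint : ∀ t > (0:ℝ), Integrable (fun x =>
      (t ^ 2 / 2 * ‖gradient (sr t) x‖ ^ 2
        + t ^ 2 / 2 * ‖Λ t x - (t⁻¹ * sr t x) • x‖ ^ 2
        + t ^ 2 / γ * ((sr t x) ^ 2) ^ γ)))
    (hρint : ∀ t > (0:ℝ), Integrable (fun x => ((sr t x) ^ 2) ^ γ))
    (V : ℝ → ℝ)
    -- representation of the pseudo-conformal energy
    (hVrep : ∀ t > (0:ℝ), V t = ∫ x,
      (t ^ 2 / 2 * ‖gradient (sr t) x‖ ^ 2
        + t ^ 2 / 2 * ‖Λ t x - (t⁻¹ * sr t x) • x‖ ^ 2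
        + t ^ 2 / γ * ((sr t x) ^ 2) ^ γ))
    -- pseudo-conformal identity
    (hVid : ∀ t > (0:ℝ), V t + (d : ℝ) * (1 - (1 + 2 / (d : ℝ)) / γ)
        * ∫ s in (0:ℝ)..t, s * ∫ x, ((sr s x) ^ 2) ^ γ
      = ∫ x, ‖x‖ ^ 2 / 2 * (sr 0 x) ^ 2) :
    ∃ C > 0, ∀ t ≥ (1:ℝ),
      (∫ x, ((sr t x) ^ 2) ^ γ) ≤ C * t ^ ((d : ℝ) * (1 - γ))
      ∧ V t ≤ C * (t ^ (2 * (1 - σ)) + ∫ x, ‖x‖ ^ 2 / 2 * (sr 0 x) ^ 2)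
      ∧ (∫ x, ‖gradient (sr t) x‖ ^ 2) ≤ C * t ^ (-2 * σ)
      ∧ (∫ x, ‖Λ t x - (t⁻¹ * sr t x) • x‖ ^ 2) ≤ C * t ^ (-2 * σ)
      ∧ (∫ x, ((sr t x) ^ 2) ^ γ) ≤ C * t ^ (-2 * σ) := by

  have hdR : (0:ℝ) < (d:ℝ) := by exact_mod_cast hd
  have hγ0 : (0:ℝ) < γ := by linarith
  set A : ℝ := ∫ x, ‖x‖ ^ 2 / 2 * (sr 0 x) ^ 2 with hAdef
  clear_value A
  have hA0 : 0 ≤ A := by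
    rw [hAdef]
    exact MeasureTheory.integral_nonneg fun x => by positivity
  have hR0 : ∀ s : ℝ, 0 ≤ ∫ x, ((sr s x) ^ 2) ^ γ := fun s =>
    MeasureTheory.integral_nonneg fun x => by positivity
  set b : ℝ := -((d:ℝ) * (1 - (1 + 2 / (d:ℝ)) / γ)) with hbdef
  have hb0 : 0 ≤ b := by
    have h1 : 1 ≤ (1 + 2 / (d:ℝ)) / γ := (one_le_div hγ0).mpr hγ'
    rw [hbdef]
    nlinarith
  set c : ℝ := 2 * (1 - σ) with hcdef
  have hcb : c = b * γ := by
    rw [hcdef, hbdef, hσ]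
    have hdne : (d:ℝ) ≠ 0 := ne_of_gt hdR
    field_simp
    ring
  have hc0 : 0 ≤ c := by rw [hcb]; exact mul_nonneg hb0 hγ0.le
  clear_value b c
  -- component bounds
  have hcomp : ∀ t : ℝ, 0 < t →
      t ^ 2 / γ * (∫ x, ((sr t x) ^ 2) ^ γ) ≤ V t
      ∧ t ^ 2 / 2 * (∫ x, ‖gradient (sr t) x‖ ^ 2) ≤ V t
      ∧ t ^ 2 / 2 * (∫ x, ‖Λ t x - (t⁻¹ * sr t x) • x‖ ^ 2) ≤ V t := by
    intro t ht
    have hS := hint t ht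
    have hgradmeas : Measurable (fun x => gradient (sr t) x) := by
      have : (fun x => gradient (sr t) x)
          = fun x => (InnerProductSpace.toDual ℝ (EuclideanSpace ℝ (Fin d))).symm
              (fderiv ℝ (sr t) x) := rfl
      rw [this]
      exact (InnerProductSpace.toDual ℝ
        (EuclideanSpace ℝ (Fin d))).symm.continuous.measurable.comp
        (measurable_fderiv ℝ (sr t))
    have ha1 : Integrable (fun x => t ^ 2 / 2 * ‖gradient (sr t) x‖ ^ 2) := by
      refine hS.mono' ?_ ?_
      · exact ((hgradmeas.norm.pow_const 2).const_mul _).aestronglyMeasurable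
      · filter_upwards with x
        have h2 : 0 ≤ t ^ 2 / 2 * ‖Λ t x - (t⁻¹ * sr t x) • x‖ ^ 2 := by positivity
        have h3 : 0 ≤ t ^ 2 / γ * ((sr t x) ^ 2) ^ γ := by positivity
        rw [Real.norm_eq_abs, abs_of_nonneg (by positivity)]
        linarith
    have ha3 : Integrable (fun x => t ^ 2 / γ * ((sr t x) ^ 2) ^ γ) :=
      (hρint t ht).const_mul _
    have ha2 : Integrable (fun x => t ^ 2 / 2 * ‖Λ t x - (t⁻¹ * sr t x) • x‖ ^ 2) := by
      have heq : (fun x => t ^ 2 / 2 * ‖Λ t x - (t⁻¹ * sr t x) • x‖ ^ 2)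
          = fun x =>
            (t ^ 2 / 2 * ‖gradient (sr t) x‖ ^ 2
              + t ^ 2 / 2 * ‖Λ t x - (t⁻¹ * sr t x) • x‖ ^ 2
              + t ^ 2 / γ * ((sr t x) ^ 2) ^ γ)
            - t ^ 2 / 2 * ‖gradient (sr t) x‖ ^ 2
            - t ^ 2 / γ * ((sr t x) ^ 2) ^ γ := by
        funext x; ring
      rw [heq]
      exact (hS.sub ha1).sub ha3
    have hVsplit : V t = (∫ x, t ^ 2 / 2 * ‖gradient (sr t) x‖ ^ 2)
        + (∫ x, t ^ 2 / 2 * ‖Λ t x - (t⁻¹ * sr t x) • x‖ ^ 2)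
        + (∫ x, t ^ 2 / γ * ((sr t x) ^ 2) ^ γ) := by
      have ha12 : Integrable (fun x =>
          t ^ 2 / 2 * ‖gradient (sr t) x‖ ^ 2
            + t ^ 2 / 2 * ‖Λ t x - (t⁻¹ * sr t x) • x‖ ^ 2) := ha1.add ha2
      have e1 : (∫ x, (t ^ 2 / 2 * ‖gradient (sr t) x‖ ^ 2
            + t ^ 2 / 2 * ‖Λ t x - (t⁻¹ * sr t x) • x‖ ^ 2)
            + t ^ 2 / γ * ((sr t x) ^ 2) ^ γ)
          = (∫ x, t ^ 2 / 2 * ‖gradient (sr t) x‖ ^ 2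
              + t ^ 2 / 2 * ‖Λ t x - (t⁻¹ * sr t x) • x‖ ^ 2)
            + ∫ x, t ^ 2 / γ * ((sr t x) ^ 2) ^ γ :=
        MeasureTheory.integral_add ha12 ha3
      have e2 : (∫ x, t ^ 2 / 2 * ‖gradient (sr t) x‖ ^ 2
            + t ^ 2 / 2 * ‖Λ t x - (t⁻¹ * sr t x) • x‖ ^ 2)
          = (∫ x, t ^ 2 / 2 * ‖gradient (sr t) x‖ ^ 2)
            + ∫ x, t ^ 2 / 2 * ‖Λ t x - (t⁻¹ * sr t x) • x‖ ^ 2 :=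
        MeasureTheory.integral_add ha1 ha2
      rw [hVrep t ht, e1, e2]
    have h1 : (0:ℝ) ≤ ∫ x, t ^ 2 / 2 * ‖gradient (sr t) x‖ ^ 2 :=
      MeasureTheory.integral_nonneg fun x => by positivity
    have h2 : (0:ℝ) ≤ ∫ x, t ^ 2 / 2 * ‖Λ t x - (t⁻¹ * sr t x) • x‖ ^ 2 :=
      MeasureTheory.integral_nonneg fun x => by positivity
    have h3 : (0:ℝ) ≤ ∫ x, t ^ 2 / γ * ((sr t x) ^ 2) ^ γ :=
      MeasureTheory.integral_nonneg fun x => by positivity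
    rw [MeasureTheory.integral_const_mul, MeasureTheory.integral_const_mul,
      MeasureTheory.integral_const_mul] at hVsplit
    rw [MeasureTheory.integral_const_mul] at h1
    rw [MeasureTheory.integral_const_mul] at h2
    rw [MeasureTheory.integral_const_mul] at h3
    refine ⟨by linarith, by linarith, by linarith⟩
  -- rewrite of the pseudo-conformal identity
  have hVG : ∀ t : ℝ, 0 < t →
      V t = A + b * ∫ s in (0:ℝ)..t, s * ∫ x, ((sr s x) ^ 2) ^ γ := by
    intro t ht
    have h := hVid t ht
    rw [hbdef]
    linarith
  -- central estimate
  have hVbound : ∃ B : ℝ, 0 ≤ B ∧ ∀ t ≥ (1:ℝ), V t ≤ A + B * t ^ c := by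
    by_cases hbz : b = 0
    · refine ⟨0, le_rfl, fun t ht => ?_⟩
      have ht0 : (0:ℝ) < t := lt_of_lt_of_le zero_lt_one ht
      rw [hVG t ht0, hbz]
      simp
    · have hbpos : 0 < b := lt_of_le_of_ne hb0 (Ne.symm hbz)
      have hcpos : 0 < c := by rw [hcb]; positivity
      set f : ℝ → ℝ := fun s => s * ∫ x, ((sr s x) ^ 2) ^ γ with hfdef
      have hf0 : ∀ s : ℝ, 0 ≤ s → 0 ≤ f s := fun s hs => mul_nonneg hs (hR0 s)
      refine ⟨b * max 0 ((∫ s in (0:ℝ)..(1:ℝ), f s) + γ * A / c),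
        mul_nonneg hbpos.le (le_max_left _ _), ?_⟩
      intro t ht1
      have ht0 : (0:ℝ) < t := lt_of_lt_of_le zero_lt_one ht1
      have htc : (0:ℝ) < t ^ c := Real.rpow_pos_of_pos ht0 c
      by_cases hI : IntervalIntegrable f volume 0 t
      · set M : ℝ → ℝ := fun u => (∫ s in (0:ℝ)..u, f s) + γ * A / c with hMdef
        have hIsub : ∀ u₁ u₂ : ℝ, 0 ≤ u₁ → u₁ ≤ u₂ → u₂ ≤ t →
            IntervalIntegrable f volume u₁ u₂ := by
          intro u₁ u₂ h1 h2 h3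
          refine hI.mono_set ?_
          rw [Set.uIcc_of_le h2, Set.uIcc_of_le ht0.le]
          exact Set.Icc_subset_Icc h1 h3
        have hmono : MonotoneOn M (Set.Icc 1 t) := by
          intro u₁ hu₁ u₂ hu₂ h12
          have e := intervalIntegral.integral_add_adjacent_intervals
            (hIsub 0 u₁ le_rfl (by linarith [hu₁.1]) (by linarith [hu₁.2, h12]))
            (hIsub u₁ u₂ (by linarith [hu₁.1]) h12 hu₂.2)
          have pos : 0 ≤ ∫ s in u₁..u₂, f s :=
            intervalIntegral.integral_nonneg h12
              (fun s hs => hf0 s (by linarith [hs.1, hu₁.1]))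
          simp only [hMdef]
          linarith
        have hM1 : 0 ≤ M 1 := by
          have h1 : 0 ≤ ∫ s in (0:ℝ)..(1:ℝ), f s :=
            intervalIntegral.integral_nonneg zero_le_one (fun s hs => hf0 s hs.1)
          have h2 : 0 ≤ γ * A / c := by positivity
          simp only [hMdef]
          linarith
        have hineq : ∀ u ∈ Set.Icc (1:ℝ) t, M u ≤ M 1 + ∫ s in (1:ℝ)..u, c * M s / s := by
          intro u hu
          have e0 := intervalIntegral.integral_add_adjacent_intervals
            (hIsub 0 1 le_rfl zero_le_one ht1) (hIsub 1 u zero_le_one hu.1 hu.2)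
          have e : M u = M 1 + ∫ s in (1:ℝ)..u, f s := by
            simp only [hMdef]
            linarith
          rw [e]
          apply add_le_add_right
          have hu1 : (1:ℝ) ≤ u := hu.1
          have huIcc : Set.uIcc (1:ℝ) u = Set.Icc 1 u := Set.uIcc_of_le hu1
          have hMint : IntervalIntegrable M volume 1 u := by
            apply MonotoneOn.intervalIntegrable
            rw [huIcc]
            exact hmono.mono (Set.Icc_subset_Icc le_rfl hu.2)
          have hcont : ContinuousOn (fun s : ℝ => c / s) (Set.uIcc (1:ℝ) u) := by
            apply ContinuousOn.div continuousOn_const continuousOn_id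
            intro s hs
            rw [huIcc] at hs
            have := hs.1
            positivity
          have hRint : IntervalIntegrable (fun s => c * M s / s) volume 1 u := by
            have h1 := hMint.continuousOn_mul hcont
            have h2 : (fun s => c * M s / s) = fun s => (c / s) * M s := by
              funext s; ring
            rw [h2]; exact h1
          apply intervalIntegral.integral_mono_on hu1 (hIsub 1 u zero_le_one hu1 hu.2) hRint
          intro s hs
          have hs0 : (0:ℝ) < s := lt_of_lt_of_le zero_lt_one hs.1
          have hVM : V s = b * M s := by
            have hbA : b * (γ * A / c) = A := by
              rw [hcb]
              field_simp
            rw [hVG s hs0]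
            simp only [hMdef]
            rw [mul_add, hbA]
            ring
          have hcomp1 := (hcomp s hs0).1
          rw [le_div_iff₀ hs0]
          have h2 : γ * (s ^ 2 / γ * ∫ x, ((sr s x) ^ 2) ^ γ) ≤ γ * V s :=
            mul_le_mul_of_nonneg_left hcomp1 hγ0.le
          have h3 : γ * (s ^ 2 / γ * ∫ x, ((sr s x) ^ 2) ^ γ)
              = s ^ 2 * ∫ x, ((sr s x) ^ 2) ^ γ := by field_simp
          have h4 : γ * V s = c * M s := by rw [hVM, hcb]; ring
          have h5 : f s * s = s ^ 2 * ∫ x, ((sr s x) ^ 2) ^ γ := by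
            rw [hfdef]; ring
          linarith
        have hgr := gronwall_log hcpos ht1 M hmono hineq
        have hexp' : Real.exp (c * Real.log t) = t ^ c := by
          rw [Real.rpow_def_of_pos ht0, mul_comm]
        rw [hexp'] at hgr
        have hle : M 1 ≤ max 0 ((∫ s in (0:ℝ)..(1:ℝ), f s) + γ * A / c) := by
          simp only [hMdef]
          exact le_max_right _ _
        have h6 : M t ≤ max 0 ((∫ s in (0:ℝ)..(1:ℝ), f s) + γ * A / c) * t ^ c :=
          le_trans hgr (mul_le_mul_of_nonneg_right hle htc.le)
        rw [hVG t ht0]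
        have h7 : (∫ s in (0:ℝ)..t, f s) = M t - γ * A / c := by
          simp only [hMdef]; ring
        rw [h7]
        have h8 : 0 ≤ γ * A / c := by positivity
        have h9 : b * (M t - γ * A / c) ≤ b * M t := by nlinarith
        have h10 : b * M t ≤ b * (max 0 ((∫ s in (0:ℝ)..(1:ℝ), f s) + γ * A / c) * t ^ c) :=
          mul_le_mul_of_nonneg_left h6 hbpos.le
        have h11 : b * (max 0 ((∫ s in (0:ℝ)..(1:ℝ), f s) + γ * A / c) * t ^ c)
            = b * max 0 ((∫ s in (0:ℝ)..(1:ℝ), f s) + γ * A / c) * t ^ c := by ring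
        linarith
      · have hzero : (∫ s in (0:ℝ)..t, f s) = 0 := intervalIntegral.integral_undef hI
        rw [hVG t ht0, hzero]
        have hB : 0 ≤ b * max 0 ((∫ s in (0:ℝ)..(1:ℝ), f s) + γ * A / c) * t ^ c := by
          have := mul_nonneg hbpos.le (le_max_left 0 ((∫ s in (0:ℝ)..(1:ℝ), f s) + γ * A / c))
          positivity
        linarith
  obtain ⟨B, hB0, hVb⟩ := hVbound
  set C : ℝ := γ * (A + B) + 2 * (A + B) + B + 1 with hCdef
  clear_value C
  have hC0 : 0 < C := by rw [hCdef]; positivity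
  refine ⟨C, hC0, ?_⟩
  intro t ht1
  have ht0 : (0:ℝ) < t := lt_of_lt_of_le zero_lt_one ht1
  have htc1 : (1:ℝ) ≤ t ^ c := by
    calc (1:ℝ) = t ^ (0:ℝ) := by rw [Real.rpow_zero]
    _ ≤ t ^ c := Real.rpow_le_rpow_of_exponent_le ht1 hc0
  have htc0 : (0:ℝ) < t ^ c := by positivity
  have hVtb : V t ≤ (A + B) * t ^ c := by
    have h1 := hVb t ht1
    have h2 : A ≤ A * t ^ c := le_mul_of_one_le_right hA0 htc1
    nlinarith
  obtain ⟨hcomp1, hcomp2, hcomp3⟩ := hcomp t ht0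
  have ht2 : (0:ℝ) < t ^ 2 := by positivity
  -- exponent bookkeeping : t^c / t^2 = t^(c-2), and c - 2 = -2σ = d(1-γ)
  have hexp : t ^ c / t ^ 2 = t ^ (-2 * σ) := by
    have hce : c - (2:ℝ) = -2 * σ := by rw [hcdef]; ring
    have h2cast : ((2:ℕ):ℝ) = (2:ℝ) := by norm_num
    rw [← Real.rpow_natCast t 2, ← Real.rpow_sub ht0, h2cast, hce]
  have hexp2 : (d:ℝ) * (1 - γ) = -2 * σ := by rw [hσ]; ring
  have htn : (0:ℝ) < t ^ (-2 * σ) := by positivity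
  have key5 : (∫ x, ((sr t x) ^ 2) ^ γ) ≤ C * t ^ (-2 * σ) := by
    set R := ∫ x, ((sr t x) ^ 2) ^ γ with hRdef
    clear_value R
    have hmul : γ * (t ^ 2 / γ * R) ≤ γ * V t :=
      mul_le_mul_of_nonneg_left hcomp1 hγ0.le
    have hid : γ * (t ^ 2 / γ * R) = t ^ 2 * R := by field_simp
    have h1 : R ≤ γ * (A + B) * t ^ c / t ^ 2 := by
      rw [le_div_iff₀ ht2]
      have h2 : t ^ 2 * R ≤ γ * V t := by linarith
      have h3 := mul_le_mul_of_nonneg_left hVtb hγ0.le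
      linarith [h2, h3]
    calc R ≤ γ * (A + B) * (t ^ c / t ^ 2) := by rw [mul_div_assoc] at h1; exact h1
      _ = γ * (A + B) * t ^ (-2 * σ) := by rw [hexp]
      _ ≤ C * t ^ (-2 * σ) := by
          have hCge : γ * (A + B) ≤ C := by rw [hCdef]; linarith
          exact mul_le_mul_of_nonneg_right hCge htn.le
  have hγAB : (0:ℝ) ≤ γ * (A + B) := by positivity
  have key34 : ∀ I : ℝ, 0 ≤ I → t ^ 2 / 2 * I ≤ V t → I ≤ C * t ^ (-2 * σ) := by
    intro I hI hIV
    have hid : 2 * (t ^ 2 / 2 * I) = t ^ 2 * I := by ring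
    have h1 : I ≤ 2 * (A + B) * t ^ c / t ^ 2 := by
      rw [le_div_iff₀ ht2]
      linarith [hid, hIV, hVtb]
    calc I ≤ 2 * (A + B) * (t ^ c / t ^ 2) := by rw [mul_div_assoc] at h1; exact h1
      _ = 2 * (A + B) * t ^ (-2 * σ) := by rw [hexp]
      _ ≤ C * t ^ (-2 * σ) := by
          have hCge : 2 * (A + B) ≤ C := by rw [hCdef]; linarith
          exact mul_le_mul_of_nonneg_right hCge htn.le
  refine ⟨?_, ?_, ?_, ?_, ?_⟩
  · rw [hexp2]; exact key5
  · have hmain : V t ≤ C * t ^ c + C * A := by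
      have hBC : B ≤ C := by rw [hCdef]; linarith
      have hAC : A ≤ C * A := le_mul_of_one_le_left hA0 (by rw [hCdef]; linarith)
      have h1 := hVb t ht1
      have h2 : B * t ^ c ≤ C * t ^ c := mul_le_mul_of_nonneg_right hBC htc0.le
      linarith
    calc V t ≤ C * t ^ c + C * A := hmain
      _ = C * (t ^ c + A) := by ring
  · exact key34 _ (MeasureTheory.integral_nonneg fun x => by positivity) hcomp2
  · exact key34 _ (MeasureTheory.integral_nonneg fun x => by positivity) hcomp3
  · exact key5
end
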